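/- Let X be a nonempty set and let f : X → V and g : X → V' be two representations of the same preorder ≿ on X, with values in partially ordered real vector spaces V and V'. Suppose f and g are co-convex (the joint image (f,g)(X) ⊆ V × V' is convex) and pervasive (V = Span(f(X)-f(X)) and V' = Span(g(X)-g(X))). Then there exist a unique linear order isomorphism L : V → V' and a unique b ∈ V' such that g = L∘f + b. -/

import Mathlib

open Pointwise

def IsLinearPartialOrder {V : Type*} [AddCommGroup V] [Module ℝ V]
    (r : V → V → Prop) : Prop :=
  (∀ v, r v v) ∧ (∀ u v w, r u v → r v w → r u w) ∧ (∀ v w, r v w → r w v → v = w) ∧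
    ∀ (v v' w : V) (l : ℝ), 0 < l → (r v v' ↔ r (l • v + w) (l • v' + w))

theorem coconvex_pervasive_unique_iso {X V V' : Type*} [Nonempty X]
    [AddCommGroup V] [Module ℝ V] [AddCommGroup V'] [Module ℝ V']
    (rX : X → X → Prop) (rV : V → V → Prop) (rV' : V' → V' → Prop)
    (hV : IsLinearPartialOrder rV) (hV' : IsLinearPartialOrder rV')
    (f : X → V) (g : X → V')
    (hf : ∀ x y, rX x y ↔ rV (f x) (f y))
    (hg : ∀ x y, rX x y ↔ rV' (g x) (g y))
    (hconv : Convex ℝ (Set.range fun x => (f x, g x)))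
    (hperf : Submodule.span ℝ (Set.range f - Set.range f) = ⊤)
    (hperg : Submodule.span ℝ (Set.range g - Set.range g) = ⊤) :
    ∃! Lb : (V →ₗ[ℝ] V') × V',
      Function.Bijective Lb.1 ∧ (∀ v w, rV v w ↔ rV' (Lb.1 v) (Lb.1 w)) ∧
        ∀ x, g x = Lb.1 (f x) + Lb.2 := by
  classical
  obtain ⟨x₀⟩ := ‹Nonempty X›
  obtain ⟨hVrefl, hVtrans, hVanti, hVlin⟩ := hV
  obtain ⟨hV'refl, hV'trans, hV'anti, hV'lin⟩ := hV'
  -- f x = f y → g x = g y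
  have hfg : ∀ x y : X, f x = f y → g x = g y := by
    intro x y h
    have h1 : rX x y := (hf x y).2 (by rw [h]; exact hVrefl (f y))
    have h2 : rX y x := (hf y x).2 (by rw [h]; exact hVrefl (f y))
    exact hV'anti (g x) (g y) ((hg x y).1 h1) ((hg y x).1 h2)
  -- joint convexity
  have hmix : ∀ (x y : X) (t : ℝ), 0 ≤ t → t ≤ 1 →
      ∃ z, f z = t • f x + (1 - t) • f y ∧ g z = t • g x + (1 - t) • g y := by
    intro x y t ht ht1
    have h1 : (f x, g x) ∈ Set.range fun x => (f x, g x) := ⟨x, rfl⟩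
    have h2 : (f y, g y) ∈ Set.range fun x => (f x, g x) := ⟨y, rfl⟩
    obtain ⟨z, hz⟩ := hconv (a := t) (b := 1 - t) h1 h2 ht (by linarith) (by ring)
    refine ⟨z, ?_, ?_⟩
    · have := congrArg Prod.fst hz
      simpa using this
    · have := congrArg Prod.snd hz
      simpa using this
  have hmix2 : ∀ (x y : X) (a c : ℝ), 0 ≤ a → 0 ≤ c → 0 < a + c →
      ∃ z, (a + c) • f z = a • f x + c • f y ∧ (a + c) • g z = a • g x + c • g y := by
    intro x y a c ha hc hac
    have h0 : a + c ≠ 0 := hac.ne'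
    obtain ⟨z, hz1, hz2⟩ := hmix x y (a / (a + c)) (div_nonneg ha hac.le)
      (by rw [div_le_one hac]; linarith)
    refine ⟨z, ?_, ?_⟩
    · rw [hz1]; match_scalars <;> field_simp <;> ring
    · rw [hz2]; match_scalars <;> field_simp <;> ring
  -- every vector is a positive multiple of a difference of values of f
  have key : ∀ v : V, ∃ a : ℝ, 0 < a ∧ ∃ p q : X, v = a • (f p - f q) := by
    intro v
    have hv : v ∈ Submodule.span ℝ (Set.range f - Set.range f) := by
      rw [hperf]; exact Submodule.mem_top
    induction hv using Submodule.span_induction with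
    | mem w hw =>
        rw [Set.mem_sub] at hw
        obtain ⟨u, ⟨p, rfl⟩, u', ⟨q, rfl⟩, rfl⟩ := hw
        exact ⟨1, one_pos, p, q, by simp⟩
    | zero => exact ⟨1, one_pos, x₀, x₀, by simp⟩
    | add u w _ _ hu hw =>
        obtain ⟨a, ha, p, q, rfl⟩ := hu
        obtain ⟨c, hc, r, s, rfl⟩ := hw
        obtain ⟨z, hz1, _⟩ := hmix2 p r a c ha.le hc.le (by linarith)
        obtain ⟨z', hz'1, _⟩ := hmix2 q s a c ha.le hc.le (by linarith)
        exact ⟨a + c, by linarith, z, z',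
          by symm; rw [smul_sub, hz1, hz'1]; module⟩
    | smul c u _ hu =>
        obtain ⟨a, ha, p, q, rfl⟩ := hu
        rcases lt_trichotomy c 0 with h | h | h
        · exact ⟨(-c) * a, mul_pos (neg_pos.2 h) ha, q, p, by module⟩
        · exact ⟨1, one_pos, x₀, x₀, by simp [h]⟩
        · exact ⟨c * a, mul_pos h ha, p, q, by module⟩
  have keyg : ∀ v : V', ∃ a : ℝ, 0 < a ∧ ∃ p q : X, v = a • (g p - g q) := by
    intro v
    have hv : v ∈ Submodule.span ℝ (Set.range g - Set.range g) := by
      rw [hperg]; exact Submodule.mem_top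
    induction hv using Submodule.span_induction with
    | mem w hw =>
        rw [Set.mem_sub] at hw
        obtain ⟨u, ⟨p, rfl⟩, u', ⟨q, rfl⟩, rfl⟩ := hw
        exact ⟨1, one_pos, p, q, by simp⟩
    | zero => exact ⟨1, one_pos, x₀, x₀, by simp⟩
    | add u w _ _ hu hw =>
        obtain ⟨a, ha, p, q, rfl⟩ := hu
        obtain ⟨c, hc, r, s, rfl⟩ := hw
        obtain ⟨z, _, hz2⟩ := hmix2 p r a c ha.le hc.le (by linarith)
        obtain ⟨z', _, hz'2⟩ := hmix2 q s a c ha.le hc.le (by linarith)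
        exact ⟨a + c, by linarith, z, z',
          by symm; rw [smul_sub, hz2, hz'2]; module⟩
    | smul c u _ hu =>
        obtain ⟨a, ha, p, q, rfl⟩ := hu
        rcases lt_trichotomy c 0 with h | h | h
        · exact ⟨(-c) * a, mul_pos (neg_pos.2 h) ha, q, p, by module⟩
        · exact ⟨1, one_pos, x₀, x₀, by simp [h]⟩
        · exact ⟨c * a, mul_pos h ha, p, q, by module⟩
  choose a ha p q hrep using key
  set Lf : V → V' := fun v => a v • (g (p v) - g (q v)) with hLfdef
  -- well-definedness
  have hW : ∀ (v : V) (c : ℝ) (x y : X), 0 < c → v = c • (f x - f y) →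
      Lf v = c • (g x - g y) := by
    intro v c x y hc hv
    have hav := ha v
    have h1 : a v • (f (p v) - f (q v)) = c • (f x - f y) := (hrep v).symm.trans hv
    have hAc : (0:ℝ) < a v + c := add_pos hav hc
    obtain ⟨z, hz1, hz2⟩ := hmix2 (p v) y (a v) c hav.le hc.le hAc
    obtain ⟨z', hz'1, hz'2⟩ := hmix2 (q v) x (a v) c hav.le hc.le hAc
    have hfz : f z = f z' := by
      have h3 : (a v + c) • f z = (a v + c) • f z' := by
        rw [hz1, hz'1]
        linear_combination (norm := module) h1
      have h4 := congrArg (fun u => (a v + c)⁻¹ • u) h3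
      simpa [inv_smul_smul₀ hAc.ne'] using h4
    have hgz := hfg z z' hfz
    rw [hgz] at hz2
    have h2 := hz2.symm.trans hz'2
    show a v • (g (p v) - g (q v)) = c • (g x - g y)
    linear_combination (norm := module) h2
  have hLfv : ∀ v : V, Lf v = a v • (g (p v) - g (q v)) := fun v => rfl
  have hadd : ∀ u w : V, Lf (u + w) = Lf u + Lf w := by
    intro u w
    obtain ⟨z, hz1, hz2⟩ := hmix2 (p u) (p w) (a u) (a w) (ha u).le (ha w).le
      (by have := ha u; have := ha w; linarith)
    obtain ⟨z', hz'1, hz'2⟩ := hmix2 (q u) (q w) (a u) (a w) (ha u).le (ha w).le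
      (by have := ha u; have := ha w; linarith)
    have hupw : u + w = (a u + a w) • (f z - f z') := by
      rw [smul_sub, hz1, hz'1]
      nth_rewrite 1 [hrep u, hrep w]
      module
    rw [hW (u + w) (a u + a w) z z'
      (by have := ha u; have := ha w; linarith) hupw, hLfv u, hLfv w,
      smul_sub, hz2, hz'2]
    module
  have hsmul : ∀ (c : ℝ) (v : V), Lf (c • v) = c • Lf v := by
    intro c v
    rcases lt_trichotomy c 0 with h | h | h
    · have hcv : c • v = ((-c) * a v) • (f (q v) - f (p v)) := by
        nth_rewrite 1 [hrep v]; module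
      rw [hW (c • v) ((-c) * a v) (q v) (p v)
        (mul_pos (neg_pos.2 h) (ha v)) hcv, hLfv v]
      module
    · subst h
      have h0 : (0:ℝ) • v = (1:ℝ) • (f x₀ - f x₀) := by simp
      rw [hW ((0:ℝ) • v) 1 x₀ x₀ one_pos h0]
      simp
    · have hcv : c • v = (c * a v) • (f (p v) - f (q v)) := by
        nth_rewrite 1 [hrep v]; module
      rw [hW (c • v) (c * a v) (p v) (q v) (mul_pos h (ha v)) hcv, hLfv v]
      module
  have hLsub : ∀ v w : V, Lf (v - w) = Lf v - Lf w := by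
    intro v w
    have hneg : Lf (-w) = -Lf w := by
      have : -w = (-1 : ℝ) • w := by module
      rw [this, hsmul]; module
    rw [sub_eq_add_neg, hadd, hneg, ← sub_eq_add_neg]
  -- order lemmas
  have hsubV : ∀ v w : V, rV v w ↔ rV (v - w) 0 := by
    intro v w
    have := hVlin v w (-w) 1 one_pos
    simpa [sub_eq_add_neg] using this
  have hsubV' : ∀ v w : V', rV' v w ↔ rV' (v - w) 0 := by
    intro v w
    have := hV'lin v w (-w) 1 one_pos
    simpa [sub_eq_add_neg] using this
  have hscaleV : ∀ (c : ℝ), 0 < c → ∀ v : V, rV v 0 ↔ rV (c • v) 0 := by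
    intro c hc v
    have := hVlin v 0 0 c hc
    simpa using this
  have hscaleV' : ∀ (c : ℝ), 0 < c → ∀ v : V', rV' v 0 ↔ rV' (c • v) 0 := by
    intro c hc v
    have := hV'lin v 0 0 c hc
    simpa using this
  have hord : ∀ v w : V, rV v w ↔ rV' (Lf v) (Lf w) := by
    intro v w
    obtain ⟨c, hc, x, y, hvw⟩ : ∃ c : ℝ, 0 < c ∧ ∃ x y : X,
        v - w = c • (f x - f y) := ⟨a (v - w), ha (v - w), p (v - w), q (v - w),
        hrep (v - w)⟩
    have hL : Lf v - Lf w = c • (g x - g y) := by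
      rw [← hLsub, hW (v - w) c x y hc hvw]
    calc rV v w ↔ rV (v - w) 0 := hsubV v w
      _ ↔ rV (c • (f x - f y)) 0 := by rw [hvw]
      _ ↔ rV (f x - f y) 0 := (hscaleV c hc _).symm
      _ ↔ rV (f x) (f y) := (hsubV (f x) (f y)).symm
      _ ↔ rX x y := (hf x y).symm
      _ ↔ rV' (g x) (g y) := hg x y
      _ ↔ rV' (g x - g y) 0 := hsubV' _ _
      _ ↔ rV' (c • (g x - g y)) 0 := hscaleV' c hc _
      _ ↔ rV' (Lf v - Lf w) 0 := by rw [hL]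
      _ ↔ rV' (Lf v) (Lf w) := (hsubV' _ _).symm
  have hLeq : ∀ x : X, g x = Lf (f x) + (g x₀ - Lf (f x₀)) := by
    intro x
    have h1 : Lf (f x) - Lf (f x₀) = g x - g x₀ := by
      rw [← hLsub]
      have := hW (f x - f x₀) 1 x x₀ one_pos (one_smul ℝ _).symm
      rw [this, one_smul]
    calc g x = (g x - g x₀) + g x₀ := by abel
      _ = (Lf (f x) - Lf (f x₀)) + g x₀ := by rw [h1]
      _ = Lf (f x) + (g x₀ - Lf (f x₀)) := by abel
  set L : V →ₗ[ℝ] V' :=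
    { toFun := Lf, map_add' := hadd, map_smul' := hsmul } with hLdef
  have hLapp : ∀ v : V, L v = Lf v := fun v => rfl
  refine ⟨⟨L, g x₀ - Lf (f x₀)⟩, ⟨⟨?_, ?_⟩, ?_, ?_⟩, ?_⟩
  · -- injective
    intro v w h
    rw [hLapp, hLapp] at h
    exact hVanti v w ((hord v w).2 (by rw [h]; exact hV'refl _))
      ((hord w v).2 (by rw [h]; exact hV'refl _))
  · -- surjective
    intro v'
    obtain ⟨c, hc, x, y, hv'⟩ := keyg v'
    exact ⟨c • (f x - f y), ((hW _ c x y hc rfl).trans hv'.symm :)⟩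
  · exact hord
  · exact hLeq
  · rintro ⟨L', b'⟩ ⟨_, _, heq'⟩
    have hLL : ∀ x : X, L' (f x) = L (f x) + (g x₀ - Lf (f x₀)) - b' := by
      intro x
      have := (heq' x).symm.trans (hLeq x)
      simp only [hLapp] at this ⊢
      rw [eq_sub_iff_add_eq, this]
    have hLL' : L' = L := by
      have hker : Submodule.span ℝ (Set.range f - Set.range f) ≤
          LinearMap.ker (L' - L) := by
        rw [Submodule.span_le]
        rintro v hv
        rw [Set.mem_sub] at hv
        obtain ⟨u, ⟨x, rfl⟩, u', ⟨y, rfl⟩, rfl⟩ := hv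
        simp only [SetLike.mem_coe, LinearMap.mem_ker, LinearMap.sub_apply,
          map_sub, hLL x, hLL y]
        abel
      rw [hperf, top_le_iff] at hker
      have : L' - L = 0 := LinearMap.ker_eq_top.mp hker
      exact sub_eq_zero.mp this
    have hbb : b' = g x₀ - Lf (f x₀) := by
      have h1 := (heq' x₀).symm.trans (hLeq x₀)
      rw [hLL'] at h1
      exact add_left_cancel h1
    rw [hLL', hbb]
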